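/- arXiv:math/0201299 — 2 statements merged into one kernel-verified Lean document; each statement's English description precedes it below -/
import Mathlib

section
/- Let 0 < ϖ < 1/8 be fixed. There is a constant C = C(ϖ) with the following property. Let 1/2 ≤ σ, σ' ≤ 1, let T, T', R, R' ≥ 1, set N₁(R) = max_{r≤R} N(σ,r,T), N₂(R) = ∑_{r≤R} N(σ,r,T), N₁(R') = max_{r'≤R'} N(σ',r',T'), N₂(R') = ∑_{r'≤R'} N(σ',r',T'). Then ∑_{r≤R} ∑_{r'≤R'} N(σ,r,T)·N(σ',r',T')·(ss')^{ϖ−1} ≤ C·{N₁(R)N₂(R)N₁(R')N₂(R')}^{1/2+2ϖ}, where for each pair (r,r') one writes h = gcd(r,r'), s = r/h, s' = r'/h. -/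
open scoped Classical

/-- `N(σ,χ,T)`: the number of zeros `ρ = β+iγ` of `L(s,χ)` with `β ≥ σ`, `|γ| ≤ T`; for the
trivial character the pole of `ζ(s)` at `s = 1` is counted among the zeros. -/
noncomputable def NchiZeros {r : ℕ} [NeZero r] (σ T : ℝ) (χ : DirichletCharacter ℂ r) : ℕ :=
  Nat.card {s : ℂ | DirichletCharacter.LFunction χ s = 0 ∧ σ ≤ s.re ∧ |s.im| ≤ T} +
    (if χ = 1 ∧ σ ≤ 1 ∧ 0 ≤ T then 1 else 0)

/-- `N(σ,r,T) = ∑_χ N(σ,χ,T)`, the sum over all primitive characters `χ` of conductor `r`. -/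
noncomputable def NZeros (σ : ℝ) (r : ℕ) (T : ℝ) : ℕ :=
  if h : r = 0 then 0 else
    haveI : NeZero r := ⟨h⟩
    ∑ᶠ χ : DirichletCharacter ℂ r, if χ.IsPrimitive then NchiZeros σ T χ else 0

/-- `N₁(R) = max_{r ≤ R} N(σ,r,T)`. -/
noncomputable def Nmax (σ T R : ℝ) : ℕ := (Finset.Icc 1 ⌊R⌋₊).sup (fun r => NZeros σ r T)

/-- `N₂(R) = ∑_{r ≤ R} N(σ,r,T)`. -/
noncomputable def Nsum (σ T R : ℝ) : ℕ := ∑ r ∈ Finset.Icc 1 ⌊R⌋₊, NZeros σ r T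

/-- The tail-zeta constant `Z(c) = ∑_{n ≥ 1} n^{-c}` (the `n = 0` term vanishes). -/
noncomputable def Zconst (c : ℝ) : ℝ := ∑' n : ℕ, (n : ℝ) ^ (-c)

lemma Zconst_summable {c : ℝ} (hc : 1 < c) : Summable (fun n : ℕ => (n : ℝ) ^ (-c)) :=
  Real.summable_nat_rpow.2 (by linarith)

lemma one_le_Zconst {c : ℝ} (hc : 1 < c) : 1 ≤ Zconst c := by
  have h := Summable.le_tsum (Zconst_summable hc) 1 (fun j _ => Real.rpow_nonneg (Nat.cast_nonneg j) _)
  simpa [Zconst] using h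

lemma sum_rpow_neg_le {c : ℝ} (hc : 1 < c) (S : Finset ℕ) :
    ∑ j ∈ S, (j : ℝ) ^ (-c) ≤ Zconst c :=
  Summable.sum_le_tsum S (fun j _ => Real.rpow_nonneg (Nat.cast_nonneg j) _) (Zconst_summable hc)

/-- For fixed `r ≠ 0`, the pairs `(r/gcd, r'/gcd)` are pairwise distinct as `r'` varies, hence
the sum of `(s·s')^{-c}` is at most `Z(c)²`. -/
lemma pair_rpow_sum_le {c : ℝ} (hc : 1 < c) {r : ℕ} (hr : r ≠ 0) (S : Finset ℕ) :
    ∑ r' ∈ S, (((r / r.gcd r') * (r' / r.gcd r') : ℕ) : ℝ) ^ (-c) ≤ Zconst c ^ 2 := by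
  classical
  set f : ℕ × ℕ → ℝ := fun p => (((p.1 * p.2 : ℕ) : ℝ)) ^ (-c) with hf
  set e : ℕ → ℕ × ℕ := fun r' => (r / r.gcd r', r' / r.gcd r') with he
  have hinj : ∀ x ∈ S, ∀ y ∈ S, e x = e y → x = y := by
    intro x _ y _ hxy
    have h1 : r / (r / r.gcd x) = r.gcd x := Nat.div_div_self (Nat.gcd_dvd_left r x) hr
    have h2 : r / (r / r.gcd y) = r.gcd y := Nat.div_div_self (Nat.gcd_dvd_left r y) hr
    have hfst : r / r.gcd x = r / r.gcd y := congrArg Prod.fst hxy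
    have hgcd : r.gcd x = r.gcd y := by rw [← h1, ← h2, hfst]
    have hsnd : x / r.gcd x = y / r.gcd y := congrArg Prod.snd hxy
    have hx : r.gcd x * (x / r.gcd x) = x := Nat.mul_div_cancel' (Nat.gcd_dvd_right r x)
    have hy : r.gcd y * (y / r.gcd y) = y := Nat.mul_div_cancel' (Nat.gcd_dvd_right r y)
    rw [← hx, ← hy, hsnd, hgcd]
  have hstep : ∑ r' ∈ S, (((r / r.gcd r') * (r' / r.gcd r') : ℕ) : ℝ) ^ (-c)
      = ∑ p ∈ S.image e, f p := by
    rw [Finset.sum_image hinj]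
  rw [hstep]
  set P := S.image e with hP
  have hsubset : P ⊆ (P.image Prod.fst) ×ˢ (P.image Prod.snd) := by
    intro p hp
    exact Finset.mem_product.2 ⟨Finset.mem_image_of_mem _ hp, Finset.mem_image_of_mem _ hp⟩
  have hnonneg : ∀ p ∈ (P.image Prod.fst) ×ˢ (P.image Prod.snd), p ∉ P → 0 ≤ f p :=
    fun p _ _ => Real.rpow_nonneg (Nat.cast_nonneg _) _
  calc ∑ p ∈ P, f p ≤ ∑ p ∈ (P.image Prod.fst) ×ˢ (P.image Prod.snd), f p :=
        Finset.sum_le_sum_of_subset_of_nonneg hsubset hnonneg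
    _ = ∑ a ∈ P.image Prod.fst, ∑ b ∈ P.image Prod.snd, ((a : ℝ) ^ (-c)) * ((b : ℝ) ^ (-c)) := by
        rw [Finset.sum_product]
        refine Finset.sum_congr rfl fun a _ => Finset.sum_congr rfl fun b _ => ?_
        simp only [hf]
        push_cast
        exact Real.mul_rpow (Nat.cast_nonneg a) (Nat.cast_nonneg b)
    _ = (∑ a ∈ P.image Prod.fst, (a : ℝ) ^ (-c)) * (∑ b ∈ P.image Prod.snd, (b : ℝ) ^ (-c)) :=
        (Finset.sum_mul_sum _ _ _ _).symm
    _ ≤ Zconst c * Zconst c :=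
        mul_le_mul (sum_rpow_neg_le hc _) (sum_rpow_neg_le hc _)
          (Finset.sum_nonneg fun j _ => Real.rpow_nonneg (Nat.cast_nonneg j) _)
          (le_trans zero_le_one (one_le_Zconst hc))
    _ = Zconst c ^ 2 := (sq _).symm

/-- Hölder step: `∑_{r'∈S} (s·s')^{ϖ-1} ≤ Z(c)² · |S|^{2ϖ}` with `c = (1-ϖ)/(1-2ϖ)`. -/
lemma inner_block_bound (ϖ : ℝ) (hϖ : 0 < ϖ) (hϖ' : ϖ < 1 / 8) {r : ℕ} (hr : r ≠ 0)
    (S : Finset ℕ) :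
    ∑ r' ∈ S, (((r / r.gcd r') * (r' / r.gcd r') : ℕ) : ℝ) ^ (ϖ - 1) ≤
      Zconst ((1 - ϖ) / (1 - 2 * ϖ)) ^ 2 * (S.card : ℝ) ^ (2 * ϖ) := by
  classical
  set c : ℝ := (1 - ϖ) / (1 - 2 * ϖ) with hcdef
  have h12 : (0 : ℝ) < 1 - 2 * ϖ := by linarith
  have hc : 1 < c := by rw [hcdef, lt_div_iff₀ h12]; linarith
  have hZ1 : 1 ≤ Zconst c := one_le_Zconst hc
  have hZsq1 : (1 : ℝ) ≤ Zconst c ^ 2 := one_le_pow₀ hZ1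
  set p : ℝ := (1 - 2 * ϖ)⁻¹ with hpdef
  set q : ℝ := (2 * ϖ)⁻¹ with hqdef
  have h2ϖ : (0 : ℝ) < 2 * ϖ := by linarith
  have hpq : p.HolderConjugate q := by
    rw [Real.holderConjugate_iff]
    constructor
    · rw [hpdef]
      exact (one_lt_inv₀ h12).2 (by linarith)
    · rw [hpdef, hqdef, inv_inv, inv_inv]; ring
  set w : ℕ → ℝ := fun r' => (((r / r.gcd r') * (r' / r.gcd r') : ℕ) : ℝ) ^ (ϖ - 1) with hw
  have hw0 : ∀ r', 0 ≤ w r' := fun r' => Real.rpow_nonneg (Nat.cast_nonneg _) _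
  have h1p : 1 / p = 1 - 2 * ϖ := by rw [hpdef, one_div, inv_inv]
  have h1q : 1 / q = 2 * ϖ := by rw [hqdef, one_div, inv_inv]
  have hwp : ∀ r', |w r'| ^ p = (((r / r.gcd r') * (r' / r.gcd r') : ℕ) : ℝ) ^ (-c) := by
    intro r'
    rw [abs_of_nonneg (hw0 r')]
    simp only [hw]
    rw [← Real.rpow_mul (Nat.cast_nonneg _)]
    congr 1
    rw [hcdef, hpdef]
    field_simp
    ring
  have hsum_wp : ∑ r' ∈ S, |w r'| ^ p ≤ Zconst c ^ 2 := by
    calc ∑ r' ∈ S, |w r'| ^ p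
        = ∑ r' ∈ S, (((r / r.gcd r') * (r' / r.gcd r') : ℕ) : ℝ) ^ (-c) :=
          Finset.sum_congr rfl fun r' _ => hwp r'
      _ ≤ Zconst c ^ 2 := pair_rpow_sum_le hc hr S
  have hfac1 : (∑ r' ∈ S, |w r'| ^ p) ^ (1 / p) ≤ Zconst c ^ 2 := by
    have h0 : (0 : ℝ) ≤ ∑ r' ∈ S, |w r'| ^ p :=
      Finset.sum_nonneg fun i _ => Real.rpow_nonneg (abs_nonneg _) _
    calc (∑ r' ∈ S, |w r'| ^ p) ^ (1 / p) ≤ (Zconst c ^ 2) ^ (1 / p) :=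
          Real.rpow_le_rpow h0 hsum_wp (by rw [h1p]; linarith)
      _ ≤ (Zconst c ^ 2) ^ (1 : ℝ) :=
          Real.rpow_le_rpow_of_exponent_le hZsq1 (by rw [h1p]; linarith)
      _ = Zconst c ^ 2 := Real.rpow_one _
  have hone : ∑ r' ∈ S, |(1 : ℝ)| ^ q = (S.card : ℝ) := by simp
  have holder := Real.inner_le_Lp_mul_Lq S w (fun _ => 1) hpq
  calc ∑ r' ∈ S, w r' = ∑ r' ∈ S, w r' * 1 := by simp
    _ ≤ (∑ r' ∈ S, |w r'| ^ p) ^ (1 / p) * (∑ r' ∈ S, |(1 : ℝ)| ^ q) ^ (1 / q) := holder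
    _ ≤ Zconst c ^ 2 * (S.card : ℝ) ^ (2 * ϖ) := by
        rw [hone, h1q]
        exact mul_le_mul_of_nonneg_right hfac1 (Real.rpow_nonneg (Nat.cast_nonneg _) _)

/-- The main elementary inequality, for arbitrary weight functions. -/
lemma main_aux (ϖ : ℝ) (hϖ : 0 < ϖ) (hϖ' : ϖ < 1 / 8) (N N' : ℕ → ℕ) (A A' : Finset ℕ)
    (hA : ∀ r ∈ A, r ≠ 0) (hA' : ∀ r' ∈ A', r' ≠ 0)
    (n1 n2 n1' n2' : ℕ)
    (hmax : ∀ r ∈ A, N r ≤ n1) (hmax' : ∀ r' ∈ A', N' r' ≤ n1')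
    (hsum : ∑ r ∈ A, N r = n2) (hsum' : ∑ r' ∈ A', N' r' = n2') :
    (∑ r ∈ A, ∑ r' ∈ A', (N r : ℝ) * (N' r' : ℝ) *
        (((r / r.gcd r') * (r' / r.gcd r') : ℕ) : ℝ) ^ (ϖ - 1)) ≤
      Zconst ((1 - ϖ) / (1 - 2 * ϖ)) ^ 2 *
        ((n1 * n2 * n1' * n2' : ℕ) : ℝ) ^ (1 / 2 + 2 * ϖ) := by
  classical
  set c : ℝ := (1 - ϖ) / (1 - 2 * ϖ) with hcdef
  have h12 : (0 : ℝ) < 1 - 2 * ϖ := by linarith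
  have hc : 1 < c := by rw [hcdef, lt_div_iff₀ h12]; linarith
  have hZ1 : 1 ≤ Zconst c := one_le_Zconst hc
  have hZ0 : 0 ≤ Zconst c := zero_le_one.trans hZ1
  have hRHS0 : 0 ≤ Zconst c ^ 2 * ((n1 * n2 * n1' * n2' : ℕ) : ℝ) ^ (1 / 2 + 2 * ϖ) :=
    mul_nonneg (pow_nonneg hZ0 2) (Real.rpow_nonneg (Nat.cast_nonneg _) _)
  set W : ℕ → ℕ → ℝ :=
    fun r r' => (((r / r.gcd r') * (r' / r.gcd r') : ℕ) : ℝ) ^ (ϖ - 1) with hW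
  have hW0 : ∀ r r', 0 ≤ W r r' := fun r r' => Real.rpow_nonneg (Nat.cast_nonneg _) _
  by_cases hn2 : n2 = 0
  · have hzero : ∀ r ∈ A, N r = 0 := by
      have h0 : ∑ r ∈ A, N r = 0 := hsum.trans hn2
      exact fun r hr => (Finset.sum_eq_zero_iff.1 h0) r hr
    have : (∑ r ∈ A, ∑ r' ∈ A', (N r : ℝ) * (N' r' : ℝ) *
        (((r / r.gcd r') * (r' / r.gcd r') : ℕ) : ℝ) ^ (ϖ - 1)) = 0 :=
      Finset.sum_eq_zero fun r hr => Finset.sum_eq_zero fun r' _ => by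
        rw [hzero r hr]; simp
    rw [this]; exact hRHS0
  by_cases hn2' : n2' = 0
  · have hzero : ∀ r' ∈ A', N' r' = 0 := by
      have h0 : ∑ r' ∈ A', N' r' = 0 := hsum'.trans hn2'
      exact fun r' hr' => (Finset.sum_eq_zero_iff.1 h0) r' hr'
    have : (∑ r ∈ A, ∑ r' ∈ A', (N r : ℝ) * (N' r' : ℝ) *
        (((r / r.gcd r') * (r' / r.gcd r') : ℕ) : ℝ) ^ (ϖ - 1)) = 0 :=
      Finset.sum_eq_zero fun r _ => Finset.sum_eq_zero fun r' hr' => by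
        rw [hzero r' hr']; simp
    rw [this]; exact hRHS0
  -- main case
  obtain ⟨r₀, hr₀A, hr₀⟩ := Finset.exists_ne_zero_of_sum_ne_zero (hsum ▸ hn2)
  obtain ⟨r₀', hr₀A', hr₀'⟩ := Finset.exists_ne_zero_of_sum_ne_zero (hsum' ▸ hn2')
  have hn1pos : 0 < n1 := lt_of_lt_of_le (Nat.pos_of_ne_zero hr₀) (hmax r₀ hr₀A)
  have hn1pos' : 0 < n1' := lt_of_lt_of_le (Nat.pos_of_ne_zero hr₀') (hmax' r₀' hr₀A')
  have hn2pos : 0 < n2 := Nat.pos_of_ne_zero hn2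
  have hn2pos' : 0 < n2' := Nat.pos_of_ne_zero hn2'
  set M : ℕ := n1 * n2 * n1' * n2' with hM
  have hMpos : 0 < M := by positivity
  have hM1R : (1 : ℝ) ≤ (M : ℝ) := by exact_mod_cast hMpos
  have hMposR : (0 : ℝ) < (M : ℝ) := lt_of_lt_of_le one_pos hM1R
  have hsub : (n2 : ℝ) * (n2' : ℝ) ≤ (M : ℝ) := by
    have : n2 * n2' ≤ M := by
      calc n2 * n2' ≤ (n1 * n2) * (n1' * n2') :=
            Nat.mul_le_mul (Nat.le_mul_of_pos_left _ hn1pos) (Nat.le_mul_of_pos_left _ hn1pos')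
        _ = M := by rw [hM]; ring
    exact_mod_cast this
  set F : ℕ × ℕ → ℝ :=
    fun p => (N p.1 : ℝ) * (if N' p.2 = 0 then 0 else 1) * Real.sqrt (W p.1 p.2) with hF
  set G : ℕ × ℕ → ℝ :=
    fun p => (if N p.1 = 0 then 0 else 1) * (N' p.2 : ℝ) * Real.sqrt (W p.1 p.2) with hG
  have hFG : ∀ p : ℕ × ℕ, (N p.1 : ℝ) * (N' p.2 : ℝ) * W p.1 p.2 = F p * G p := by
    intro p
    simp only [hF, hG]
    by_cases h1 : N p.1 = 0
    · simp [h1]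
    · by_cases h2 : N' p.2 = 0
      · simp [h2]
      · simp only [if_neg h1, if_neg h2]
        have hm : Real.sqrt (W p.1 p.2) * Real.sqrt (W p.1 p.2) = W p.1 p.2 :=
          Real.mul_self_sqrt (hW0 _ _)
        conv_lhs => rw [← hm]
        ring
  have key : (∑ r ∈ A, ∑ r' ∈ A', (N r : ℝ) * (N' r' : ℝ) *
        (((r / r.gcd r') * (r' / r.gcd r') : ℕ) : ℝ) ^ (ϖ - 1))
      = ∑ p ∈ A ×ˢ A', F p * G p := by
    rw [Finset.sum_product]
    exact Finset.sum_congr rfl fun r _ => Finset.sum_congr rfl fun r' _ => hFG (r, r')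
  have hFsq : ∀ p : ℕ × ℕ,
      F p ^ 2 = (N p.1 : ℝ) ^ 2 * ((if N' p.2 = 0 then 0 else 1) * W p.1 p.2) := by
    intro p
    simp only [hF]
    by_cases h2 : N' p.2 = 0
    · simp [h2]
    · simp only [if_neg h2]
      rw [mul_one, one_mul, mul_pow, Real.sq_sqrt (hW0 _ _)]
  have hGsq : ∀ p : ℕ × ℕ,
      G p ^ 2 = (N' p.2 : ℝ) ^ 2 * ((if N p.1 = 0 then 0 else 1) * W p.1 p.2) := by
    intro p
    simp only [hG]
    by_cases h1 : N p.1 = 0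
    · simp [h1]
    · simp only [if_neg h1]
      rw [one_mul, mul_pow, Real.sq_sqrt (hW0 _ _), one_mul]
  -- bound on ∑ F²
  have hsumF : ∑ p ∈ A ×ˢ A', F p ^ 2 ≤
      (Zconst c ^ 2 * (n2' : ℝ) ^ (2 * ϖ)) * ((n1 : ℝ) * (n2 : ℝ)) := by
    rw [Finset.sum_product]
    have inner_bd : ∀ r ∈ A, ∑ r' ∈ A', (if N' r' = 0 then (0 : ℝ) else 1) * W r r'
        ≤ Zconst c ^ 2 * (n2' : ℝ) ^ (2 * ϖ) := by
      intro r hrA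
      have hr0 : r ≠ 0 := hA r hrA
      have h1 : ∑ r' ∈ A', (if N' r' = 0 then (0 : ℝ) else 1) * W r r'
          = ∑ r' ∈ A'.filter (fun r' => ¬ (N' r' = 0)), W r r' := by
        rw [Finset.sum_filter]
        exact Finset.sum_congr rfl fun r' _ => by by_cases h : N' r' = 0 <;> simp [h]
      rw [h1]
      have h2 := inner_block_bound ϖ hϖ hϖ' hr0 (A'.filter (fun r' => ¬ (N' r' = 0)))
      have hcard : (A'.filter (fun r' => ¬ (N' r' = 0))).card ≤ n2' := by
        calc (A'.filter (fun r' => ¬ (N' r' = 0))).card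
            = ∑ r' ∈ A'.filter (fun r' => ¬ (N' r' = 0)), 1 := by simp
          _ ≤ ∑ r' ∈ A'.filter (fun r' => ¬ (N' r' = 0)), N' r' :=
              Finset.sum_le_sum fun r' hr' =>
                Nat.one_le_iff_ne_zero.2 (Finset.mem_filter.1 hr').2
          _ ≤ ∑ r' ∈ A', N' r' := Finset.sum_le_sum_of_subset (Finset.filter_subset _ _)
          _ = n2' := hsum'
      refine h2.trans ?_
      refine mul_le_mul_of_nonneg_left ?_ (pow_nonneg hZ0 2)
      exact Real.rpow_le_rpow (Nat.cast_nonneg _) (Nat.cast_le.2 hcard) (by linarith)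
    calc ∑ r ∈ A, ∑ r' ∈ A', F (r, r') ^ 2
        = ∑ r ∈ A, (N r : ℝ) ^ 2 *
            (∑ r' ∈ A', (if N' r' = 0 then (0 : ℝ) else 1) * W r r') := by
          refine Finset.sum_congr rfl fun r _ => ?_
          rw [Finset.mul_sum]
          exact Finset.sum_congr rfl fun r' _ => hFsq (r, r')
      _ ≤ ∑ r ∈ A, (N r : ℝ) ^ 2 * (Zconst c ^ 2 * (n2' : ℝ) ^ (2 * ϖ)) :=
          Finset.sum_le_sum fun r hr =>
            mul_le_mul_of_nonneg_left (inner_bd r hr) (sq_nonneg _)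
      _ = (Zconst c ^ 2 * (n2' : ℝ) ^ (2 * ϖ)) * ∑ r ∈ A, (N r : ℝ) ^ 2 := by
          rw [← Finset.sum_mul, mul_comm]
      _ ≤ (Zconst c ^ 2 * (n2' : ℝ) ^ (2 * ϖ)) * ((n1 : ℝ) * (n2 : ℝ)) := by
          refine mul_le_mul_of_nonneg_left ?_
            (mul_nonneg (pow_nonneg hZ0 2) (Real.rpow_nonneg (Nat.cast_nonneg _) _))
          calc ∑ r ∈ A, (N r : ℝ) ^ 2 ≤ ∑ r ∈ A, (n1 : ℝ) * (N r : ℝ) :=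
                Finset.sum_le_sum fun r hr => by
                  rw [sq]
                  exact mul_le_mul_of_nonneg_right (Nat.cast_le.2 (hmax r hr))
                    (Nat.cast_nonneg _)
            _ = (n1 : ℝ) * (n2 : ℝ) := by
                rw [← Finset.mul_sum, ← Nat.cast_sum, hsum]
  -- bound on ∑ G²
  have hWsym : ∀ x r' : ℕ,
      W x r' = (((r' / r'.gcd x) * (x / r'.gcd x) : ℕ) : ℝ) ^ (ϖ - 1) := by
    intro x r'
    simp only [hW]
    rw [Nat.gcd_comm r' x, Nat.mul_comm (r' / x.gcd r') (x / x.gcd r')]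
  have hsumG : ∑ p ∈ A ×ˢ A', G p ^ 2 ≤
      (Zconst c ^ 2 * (n2 : ℝ) ^ (2 * ϖ)) * ((n1' : ℝ) * (n2' : ℝ)) := by
    rw [Finset.sum_product_right]
    have inner_bd : ∀ r' ∈ A', ∑ r ∈ A, (if N r = 0 then (0 : ℝ) else 1) * W r r'
        ≤ Zconst c ^ 2 * (n2 : ℝ) ^ (2 * ϖ) := by
      intro r' hr'A
      have hr0 : r' ≠ 0 := hA' r' hr'A
      have h1 : ∑ r ∈ A, (if N r = 0 then (0 : ℝ) else 1) * W r r'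
          = ∑ r ∈ A.filter (fun r => ¬ (N r = 0)), W r r' := by
        rw [Finset.sum_filter]
        exact Finset.sum_congr rfl fun r _ => by by_cases h : N r = 0 <;> simp [h]
      rw [h1]
      have h2 := inner_block_bound ϖ hϖ hϖ' hr0 (A.filter (fun r => ¬ (N r = 0)))
      have h3 : ∑ r ∈ A.filter (fun r => ¬ (N r = 0)), W r r'
          = ∑ x ∈ A.filter (fun r => ¬ (N r = 0)),
              (((r' / r'.gcd x) * (x / r'.gcd x) : ℕ) : ℝ) ^ (ϖ - 1) :=
        Finset.sum_congr rfl fun x _ => hWsym x r'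
      rw [h3]
      have hcard : (A.filter (fun r => ¬ (N r = 0))).card ≤ n2 := by
        calc (A.filter (fun r => ¬ (N r = 0))).card
            = ∑ r ∈ A.filter (fun r => ¬ (N r = 0)), 1 := by simp
          _ ≤ ∑ r ∈ A.filter (fun r => ¬ (N r = 0)), N r :=
              Finset.sum_le_sum fun r hr =>
                Nat.one_le_iff_ne_zero.2 (Finset.mem_filter.1 hr).2
          _ ≤ ∑ r ∈ A, N r := Finset.sum_le_sum_of_subset (Finset.filter_subset _ _)
          _ = n2 := hsum
      refine h2.trans ?_
      refine mul_le_mul_of_nonneg_left ?_ (pow_nonneg hZ0 2)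
      exact Real.rpow_le_rpow (Nat.cast_nonneg _) (Nat.cast_le.2 hcard) (by linarith)
    calc ∑ r' ∈ A', ∑ r ∈ A, G (r, r') ^ 2
        = ∑ r' ∈ A', (N' r' : ℝ) ^ 2 *
            (∑ r ∈ A, (if N r = 0 then (0 : ℝ) else 1) * W r r') := by
          refine Finset.sum_congr rfl fun r' _ => ?_
          rw [Finset.mul_sum]
          exact Finset.sum_congr rfl fun r _ => hGsq (r, r')
      _ ≤ ∑ r' ∈ A', (N' r' : ℝ) ^ 2 * (Zconst c ^ 2 * (n2 : ℝ) ^ (2 * ϖ)) :=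
          Finset.sum_le_sum fun r' hr' =>
            mul_le_mul_of_nonneg_left (inner_bd r' hr') (sq_nonneg _)
      _ = (Zconst c ^ 2 * (n2 : ℝ) ^ (2 * ϖ)) * ∑ r' ∈ A', (N' r' : ℝ) ^ 2 := by
          rw [← Finset.sum_mul, mul_comm]
      _ ≤ (Zconst c ^ 2 * (n2 : ℝ) ^ (2 * ϖ)) * ((n1' : ℝ) * (n2' : ℝ)) := by
          refine mul_le_mul_of_nonneg_left ?_
            (mul_nonneg (pow_nonneg hZ0 2) (Real.rpow_nonneg (Nat.cast_nonneg _) _))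
          calc ∑ r' ∈ A', (N' r' : ℝ) ^ 2 ≤ ∑ r' ∈ A', (n1' : ℝ) * (N' r' : ℝ) :=
                Finset.sum_le_sum fun r' hr' => by
                  rw [sq]
                  exact mul_le_mul_of_nonneg_right (Nat.cast_le.2 (hmax' r' hr'))
                    (Nat.cast_nonneg _)
            _ = (n1' : ℝ) * (n2' : ℝ) := by
                rw [← Finset.mul_sum, ← Nat.cast_sum, hsum']
  -- put it together
  rw [key]
  have hL0 : 0 ≤ ∑ p ∈ A ×ˢ A', F p * G p := by
    rw [← key]
    refine Finset.sum_nonneg fun r _ => Finset.sum_nonneg fun r' _ => ?_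
    exact mul_nonneg (mul_nonneg (Nat.cast_nonneg _) (Nat.cast_nonneg _)) (hW0 _ _)
  have cauchy := Finset.sum_mul_sq_le_sq_mul_sq (A ×ˢ A') F G
  refine le_of_pow_le_pow_left₀ two_ne_zero hRHS0 ?_
  have hB2nonneg : 0 ≤ ∑ p ∈ A ×ˢ A', G p ^ 2 :=
    Finset.sum_nonneg fun p _ => sq_nonneg _
  have hB1nonneg : 0 ≤ (Zconst c ^ 2 * (n2' : ℝ) ^ (2 * ϖ)) * ((n1 : ℝ) * (n2 : ℝ)) := by
    have := Real.rpow_nonneg (Nat.cast_nonneg n2') (2 * ϖ)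
    have h2 := pow_nonneg hZ0 2
    positivity
  calc (∑ p ∈ A ×ˢ A', F p * G p) ^ 2
      ≤ (∑ p ∈ A ×ˢ A', F p ^ 2) * (∑ p ∈ A ×ˢ A', G p ^ 2) := cauchy
    _ ≤ ((Zconst c ^ 2 * (n2' : ℝ) ^ (2 * ϖ)) * ((n1 : ℝ) * (n2 : ℝ))) *
          ((Zconst c ^ 2 * (n2 : ℝ) ^ (2 * ϖ)) * ((n1' : ℝ) * (n2' : ℝ))) :=
        mul_le_mul hsumF hsumG hB2nonneg hB1nonneg
    _ = (Zconst c ^ 2) ^ 2 * (((n2 : ℝ) * (n2' : ℝ)) ^ (2 * ϖ)) * (M : ℝ) := by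
        rw [Real.mul_rpow (Nat.cast_nonneg n2) (Nat.cast_nonneg n2')]
        have : ((M : ℕ) : ℝ) = (n1 : ℝ) * (n2 : ℝ) * (n1' : ℝ) * (n2' : ℝ) := by
          rw [hM]; push_cast; ring
        rw [this]; ring
    _ ≤ (Zconst c ^ 2) ^ 2 * ((M : ℝ) ^ (2 * ϖ)) * (M : ℝ) := by
        refine mul_le_mul_of_nonneg_right (mul_le_mul_of_nonneg_left ?_ (by positivity))
          (Nat.cast_nonneg _)
        exact Real.rpow_le_rpow (by positivity) hsub (by linarith)
    _ = (Zconst c ^ 2) ^ 2 * (M : ℝ) ^ (2 * ϖ + 1) := by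
        rw [Real.rpow_add hMposR, Real.rpow_one]; ring
    _ ≤ (Zconst c ^ 2) ^ 2 * (M : ℝ) ^ (1 + 4 * ϖ) := by
        refine mul_le_mul_of_nonneg_left ?_ (by positivity)
        exact Real.rpow_le_rpow_of_exponent_le hM1R (by linarith)
    _ = (Zconst c ^ 2 * (M : ℝ) ^ (1 / 2 + 2 * ϖ)) ^ 2 := by
        rw [mul_pow]
        congr 1
        rw [← Real.rpow_natCast ((M : ℝ) ^ (1 / 2 + 2 * ϖ)) 2,
          ← Real.rpow_mul (Nat.cast_nonneg _)]
        congr 1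
        push_cast
        ring

/-- The first part of **Lemma 3** of the paper:
`∑_{r ≤ R} ∑_{r' ≤ R'} N(σ,r,T)·N(σ',r',T')·(ss')^{ϖ-1}
  ≪ {N₁(R)N₂(R)N₁(R')N₂(R')}^{1/2+2ϖ}`, where `s = r/(r,r')`, `s' = r'/(r,r')`. -/
theorem zero_density_pair_sum_bound (ϖ : ℝ) (hϖ : 0 < ϖ) (hϖ' : ϖ < 1 / 8) :
    ∃ C : ℝ, 0 < C ∧ ∀ σ σ' T T' R R' : ℝ,
      1 / 2 ≤ σ → σ ≤ 1 → 1 / 2 ≤ σ' → σ' ≤ 1 →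
      1 ≤ T → 1 ≤ T' → 1 ≤ R → 1 ≤ R' →
      (∑ r ∈ Finset.Icc 1 ⌊R⌋₊, ∑ r' ∈ Finset.Icc 1 ⌊R'⌋₊,
          (NZeros σ r T : ℝ) * (NZeros σ' r' T' : ℝ) *
            (((r / r.gcd r') * (r' / r.gcd r') : ℕ) : ℝ) ^ (ϖ - 1)) ≤
        C * ((Nmax σ T R * Nsum σ T R * Nmax σ' T' R' * Nsum σ' T' R' : ℕ) : ℝ) ^
          (1 / 2 + 2 * ϖ) := by
  have h12 : (0 : ℝ) < 1 - 2 * ϖ := by linarith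
  have hc : 1 < (1 - ϖ) / (1 - 2 * ϖ) := by rw [lt_div_iff₀ h12]; linarith
  refine ⟨Zconst ((1 - ϖ) / (1 - 2 * ϖ)) ^ 2, ?_, ?_⟩
  · have := one_le_Zconst hc
    positivity
  intro σ σ' T T' R R' _ _ _ _ _ _ _ _
  refine main_aux ϖ hϖ hϖ' (fun r => NZeros σ r T) (fun r' => NZeros σ' r' T')
    (Finset.Icc 1 ⌊R⌋₊) (Finset.Icc 1 ⌊R'⌋₊) ?_ ?_
    (Nmax σ T R) (Nsum σ T R) (Nmax σ' T' R') (Nsum σ' T' R') ?_ ?_ rfl rfl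
  · exact fun r hr => Nat.one_le_iff_ne_zero.1 (Finset.mem_Icc.1 hr).1
  · exact fun r' hr' => Nat.one_le_iff_ne_zero.1 (Finset.mem_Icc.1 hr').1
  · exact fun r hr => Finset.le_sup (f := fun r => NZeros σ r T) hr
  · exact fun r' hr' => Finset.le_sup (f := fun r' => NZeros σ' r' T') hr'
end

section
/- For every integer K ≥ 7 and every positive integer N: 2·(1 + H(3;N,K)·2^{−K} + (1/3)·H(5;N,K)·4^{−K}) ≥ 2.7895. -/
/-- `H(d;N,K)` is the number of tuples `(ν₁,…,ν_K)` with `1 ≤ νᵢ ≤ ε(d)` (where `ε(d)` is the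
multiplicative order of `2` mod `d`) and `d ∣ N - ∑ 2^{νᵢ}`. -/
noncomputable def Hcount (d N K : ℕ) : ℕ :=
  Nat.card {ν : Fin K → ℕ //
    (∀ i, 1 ≤ ν i ∧ ν i ≤ orderOf (2 : ZMod d)) ∧
    (d : ℤ) ∣ ((N : ℤ) - ∑ i, 2 ^ ν i)}

/-- Finite-count version: number of tuples with entries in `[1,ε]` whose power sum is `r`. -/
def Cnt (d ε K : ℕ) [NeZero d] (r : ZMod d) : ℕ :=
  ((Fintype.piFinset fun _ : Fin K => Finset.Icc 1 ε).filter
    fun ν => ∑ i, (2 : ZMod d) ^ ν i = r).card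

lemma Hcount_eq_Cnt (d N K : ℕ) [NeZero d] :
    Hcount d N K = Cnt d (orderOf (2 : ZMod d)) K ((N : ZMod d)) := by
  classical
  rw [Hcount, Cnt]
  have e : {ν : Fin K → ℕ //
      (∀ i, 1 ≤ ν i ∧ ν i ≤ orderOf (2 : ZMod d)) ∧
      (d : ℤ) ∣ ((N : ℤ) - ∑ i, 2 ^ ν i)} ≃
      {ν // ν ∈ ((Fintype.piFinset fun _ : Fin K => Finset.Icc 1 (orderOf (2 : ZMod d))).filter
        fun ν => ∑ i, (2 : ZMod d) ^ ν i = (N : ZMod d))} := by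
    apply Equiv.subtypeEquivRight
    intro ν
    rw [Finset.mem_filter, Fintype.mem_piFinset]
    simp only [Finset.mem_Icc]
    constructor
    · rintro ⟨h1, h2⟩
      refine ⟨h1, ?_⟩
      have := (ZMod.intCast_zmod_eq_zero_iff_dvd _ d).2 h2
      push_cast at this
      rw [sub_eq_zero] at this
      exact this.symm
    · rintro ⟨h1, h2⟩
      refine ⟨h1, ?_⟩
      rw [← ZMod.intCast_zmod_eq_zero_iff_dvd]
      push_cast
      rw [sub_eq_zero]
      exact h2.symm
  rw [Nat.card_congr e, Nat.card_eq_finsetCard]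

lemma Cnt_total (d ε K : ℕ) [NeZero d] :
    ∑ r : ZMod d, Cnt d ε K r = ε ^ K := by
  classical
  have := Finset.card_eq_sum_card_fiberwise
    (f := fun ν : Fin K → ℕ => ∑ i, (2 : ZMod d) ^ ν i)
    (s := Fintype.piFinset fun _ : Fin K => Finset.Icc 1 ε)
    (t := Finset.univ) (fun x _ => Finset.mem_univ _)
  rw [Fintype.card_piFinset] at this
  simp only [Nat.card_Icc] at this
  simp only [Cnt]
  rw [← this]
  simp

lemma erase_image (d : ℕ) [NeZero d] (r : ZMod d) :
    (Finset.univ.erase (0 : ZMod d)).image (fun s => r - s) = Finset.univ.erase r := by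
  ext t
  simp only [Finset.mem_image, Finset.mem_erase, Finset.mem_univ, and_true]
  constructor
  · rintro ⟨s, hs, rfl⟩
    intro h
    exact hs (sub_eq_self.mp h)
  · intro ht
    exact ⟨r - t, fun h => ht (by rw [sub_eq_zero] at h; exact h.symm), by ring⟩

lemma Cnt_succ (d ε K : ℕ) [NeZero d]
    (himg : (Finset.Icc 1 ε).image (fun v => (2 : ZMod d) ^ v) = Finset.univ.erase 0)
    (hinj : ∀ x ∈ Finset.Icc 1 ε, ∀ y ∈ Finset.Icc 1 ε,
      (2 : ZMod d) ^ x = (2 : ZMod d) ^ y → x = y)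
    (r : ZMod d) :
    Cnt d ε (K + 1) r + Cnt d ε K r = ε ^ K := by
  classical
  have step : Cnt d ε (K + 1) r = ∑ v ∈ Finset.Icc 1 ε, Cnt d ε K (r - (2 : ZMod d) ^ v) := by
    rw [Cnt]
    rw [Finset.card_eq_sum_card_fiberwise
      (f := fun ν : Fin (K + 1) → ℕ => ν (Fin.last K)) (t := Finset.Icc 1 ε)
      (fun ν hν => by
        rw [Finset.mem_coe, Finset.mem_filter, Fintype.mem_piFinset] at hν
        exact hν.1 (Fin.last K))]
    refine Finset.sum_congr rfl fun v hv => ?_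
    rw [Cnt]
    apply Finset.card_nbij' (fun ν => Fin.init ν) (fun g => Fin.snoc g v)
    · intro ν hν
      simp only [Finset.mem_coe, Finset.mem_filter, Fintype.mem_piFinset] at hν ⊢
      obtain ⟨⟨hmem, hsum⟩, hlast⟩ := hν
      refine ⟨fun i => hmem i.castSucc, ?_⟩
      rw [Fin.sum_univ_castSucc] at hsum
      have einit : ∑ i : Fin K, (2 : ZMod d) ^ (Fin.init ν i)
          = ∑ i : Fin K, (2 : ZMod d) ^ (ν i.castSucc) := rfl
      rw [einit, eq_sub_iff_add_eq, ← hlast]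
      exact hsum
    · intro g hg
      simp only [Finset.mem_coe, Finset.mem_filter, Fintype.mem_piFinset] at hg ⊢
      obtain ⟨hmem, hsum⟩ := hg
      refine ⟨⟨fun i => ?_, ?_⟩, ?_⟩
      · refine Fin.lastCases ?_ (fun j => ?_) i
        · simpa using hv
        · simpa using hmem j
      · rw [Fin.sum_univ_castSucc]
        simp only [Fin.snoc_castSucc, Fin.snoc_last]
        rw [hsum]; ring
      · simp
    · intro ν hν
      simp only [Finset.mem_coe, Finset.mem_filter] at hν
      rw [← hν.2]
      exact Fin.snoc_init_self ν
    · intro g hg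
      simp
  rw [step]
  rw [← Finset.sum_image (g := fun v => (2 : ZMod d) ^ v) (f := fun s => Cnt d ε K (r - s)) hinj,
    himg]
  rw [← Finset.sum_image (g := fun s => r - s) (f := fun t => Cnt d ε K t)
    (fun x _ y _ h => by have := sub_right_injective h; exact this)]
  rw [erase_image]
  rw [Finset.sum_erase_add Finset.univ (fun t => Cnt d ε K t) (Finset.mem_univ r)]
  exact Cnt_total d ε K

lemma Cnt_bounds (d ε K : ℕ) [NeZero d] (hd : d = ε + 1) (hε : 1 ≤ ε)
    (himg : (Finset.Icc 1 ε).image (fun v => (2 : ZMod d) ^ v) = Finset.univ.erase 0)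
    (hinj : ∀ x ∈ Finset.Icc 1 ε, ∀ y ∈ Finset.Icc 1 ε,
      (2 : ZMod d) ^ x = (2 : ZMod d) ^ y → x = y) (hK : 1 ≤ K) (r : ZMod d) :
    ε ^ K ≤ d * Cnt d ε K r + ε ∧ d * Cnt d ε K r ≤ ε ^ K + ε := by
  induction K with
  | zero => omega
  | succ K ih =>
    rcases Nat.eq_or_lt_of_le hK with h1 | h1
    · -- K + 1 = 1, i.e. K = 0
      have hK0 : K = 0 := by omega
      subst hK0
      have h01 : Cnt d ε 1 r + Cnt d ε 0 r = ε ^ 0 := Cnt_succ d ε 0 himg hinj r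
      rw [pow_zero] at h01
      have hle : Cnt d ε 1 r ≤ 1 := by omega
      have hmul : d * Cnt d ε 1 r ≤ d * 1 := Nat.mul_le_mul_left d hle
      rw [zero_add, pow_one]
      constructor
      · exact Nat.le_add_left ε _
      · calc d * Cnt d ε 1 r ≤ d * 1 := hmul
          _ = ε + 1 := by rw [hd]; ring
          _ ≤ ε + ε := by omega
    · have hK1 : 1 ≤ K := by omega
      obtain ⟨ihl, ihr⟩ := ih hK1
      have hrec : Cnt d ε (K + 1) r + Cnt d ε K r = ε ^ K := Cnt_succ d ε K himg hinj r
      have hmul : d * Cnt d ε (K + 1) r + d * Cnt d ε K r = d * ε ^ K := by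
        rw [← Nat.mul_add, hrec]
      have hpow : ε ^ (K + 1) = ε * ε ^ K := by ring
      have hd' : d * ε ^ K = ε * ε ^ K + ε ^ K := by rw [hd]; ring
      constructor
      · rw [hpow]; linarith
      · rw [hpow]; linarith

lemma order3 : orderOf (2 : ZMod 3) = 2 := by
  rw [orderOf_eq_iff (by norm_num)]; decide

lemma order5 : orderOf (2 : ZMod 5) = 4 := by
  rw [orderOf_eq_iff (by norm_num)]; decide

lemma H3_bound (N K : ℕ) : 2 ^ K ≤ 3 * Hcount 3 N K + 2 := by
  have h := Cnt_bounds 3 2 K rfl (by norm_num) (by decide) (by decide)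
  rcases Nat.eq_zero_or_pos K with hK0 | hK1
  · subst hK0; norm_num
  · have := (h hK1 ((N : ZMod 3))).1
    rw [Hcount_eq_Cnt, order3]
    omega

lemma H5_bound (N K : ℕ) : 4 ^ K ≤ 5 * Hcount 5 N K + 4 := by
  have h := Cnt_bounds 5 4 K rfl (by norm_num) (by decide) (by decide)
  rcases Nat.eq_zero_or_pos K with hK0 | hK1
  · subst hK0; norm_num
  · have := (h hK1 ((N : ZMod 5))).1
    rw [Hcount_eq_Cnt, order5]
    omega

/-- The numerical lower bound (25) of the paper:
`2·(1 + H(3;N,K)·2^{-K} + (1/3)·H(5;N,K)·4^{-K}) ≥ 2.7895` for `K ≥ 7`. -/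
theorem Hcount_lower_bound (K : ℕ) (hK : 7 ≤ K) (N : ℕ) (hN : 0 < N) :
    (2.7895 : ℝ) ≤ 2 * (1 + (Hcount 3 N K : ℝ) / 2 ^ K + (1 / 3) * (Hcount 5 N K : ℝ) / 4 ^ K) := by
  have h3 : (2 : ℝ) ^ K ≤ 3 * (Hcount 3 N K : ℝ) + 2 := by exact_mod_cast H3_bound N K
  have h5 : (4 : ℝ) ^ K ≤ 5 * (Hcount 5 N K : ℝ) + 4 := by exact_mod_cast H5_bound N K
  have hx : (128 : ℝ) ≤ 2 ^ K := by
    calc (128 : ℝ) = 2 ^ 7 := by norm_num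
    _ ≤ 2 ^ K := by exact pow_le_pow_right₀ (by norm_num) hK
  have hy : (16384 : ℝ) ≤ 4 ^ K := by
    calc (16384 : ℝ) = 4 ^ 7 := by norm_num
    _ ≤ 4 ^ K := by exact pow_le_pow_right₀ (by norm_num) hK
  have hx0 : (0 : ℝ) < 2 ^ K := by positivity
  have hy0 : (0 : ℝ) < 4 ^ K := by positivity
  have hA : (0.328125 : ℝ) ≤ (Hcount 3 N K : ℝ) / 2 ^ K := by
    rw [le_div_iff₀ hx0]
    nlinarith
  have hB : (0.19995 : ℝ) ≤ (Hcount 5 N K : ℝ) / 4 ^ K := by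
    rw [le_div_iff₀ hy0]
    nlinarith
  have e : (1 / 3 : ℝ) * (Hcount 5 N K : ℝ) / 4 ^ K
      = (1 / 3 : ℝ) * ((Hcount 5 N K : ℝ) / 4 ^ K) := by ring
  rw [e]
  linarith
end
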